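/- (Non-expansiveness of the coordinate update operator.) Let g : ℝ → ℝ ∪ {+∞} be a convex, proper, lower semicontinuous function and let x ∈ ℝ^d be nonzero. For w ∈ ℝ^d and s ∈ ℝ, suppose u₁ is the unique minimizer over u ∈ ℝ of (1/2)·‖w₁ + (u − s₁)x‖² + g(u) and u₂ is the unique minimizer over u ∈ ℝ of (1/2)·‖w₂ + (u − s₂)x‖² + g(u). Then |u₁ − u₂| ≤ |(s₁ − s₂) − (w₁ − w₂)ᵀx/‖x‖²|. -/

import Mathlib

open scoped RealInnerProductSpace

/-- Key real one-dimensional lemma: if the minimality-with-convexity inequality holds along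
the segment from `u` to `v`, then we get the subgradient-type inequality. -/
lemma aux_key_ineq (a c u v G H : ℝ) (ha : 0 < a)
    (h : ∀ θ : ℝ, 0 < θ → θ ≤ 1 →
      a/2*(u-c)^2 + G ≤ a/2*(θ*v + (1-θ)*u - c)^2 + (θ*H + (1-θ)*G)) :
    G - H ≤ a*(v-u)*(u-c) := by
  apply le_of_forall_pos_le_add
  intro ε hε
  set K : ℝ := a/2*(v-u)^2 with hK
  have hK0 : 0 ≤ K := by positivity
  set θ : ℝ := min 1 (ε/(K+1)) with hθ
  have hθpos : 0 < θ := lt_min one_pos (by positivity)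
  have hθ1 : θ ≤ 1 := min_le_left _ _
  have hKθ : K * θ ≤ ε := by
    have h1 : θ ≤ ε/(K+1) := min_le_right _ _
    have : K * θ ≤ K * (ε/(K+1)) := by
      exact mul_le_mul_of_nonneg_left h1 hK0
    calc K * θ ≤ K * (ε/(K+1)) := this
      _ = ε * (K/(K+1)) := by ring
      _ ≤ ε * 1 := by
        have : K/(K+1) ≤ 1 := by rw [div_le_one (by positivity)]; linarith
        exact mul_le_mul_of_nonneg_left this hε.le
      _ = ε := mul_one ε
  have h2 := h θ hθpos hθ1
  have hexp : a/2*(θ*v + (1-θ)*u - c)^2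
      = a/2*(u-c)^2 + a*θ*(v-u)*(u-c) + K*θ^2 := by
    rw [hK]; ring
  rw [hexp] at h2
  -- h2 : a/2*(u-c)^2 + G ≤ a/2*(u-c)^2 + a*θ*(v-u)*(u-c) + K*θ^2 + (θ*H + (1-θ)*G)
  -- so θ*(G - H) ≤ θ*(a*(v-u)*(u-c)) + K*θ^2, divide by θ
  have h3 : θ*(G - H) ≤ θ*(a*(v-u)*(u-c) + K*θ) := by nlinarith
  have h4 : G - H ≤ a*(v-u)*(u-c) + K*θ := le_of_mul_le_mul_left (by linarith [h3]) hθpos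
  linarith

/-- Non-expansiveness of the coordinate update operator: if `u₁`, `u₂` are the unique
minimizers of `u ↦ (1/2)‖wⱼ + (u − sⱼ)x‖² + g(u)` (for `j = 1, 2`), where `g` is convex,
proper and lower semicontinuous, then `|u₁ − u₂| ≤ |(s₁ − s₂) − (w₁ − w₂)ᵀx/‖x‖²|`. -/
theorem coordinate_update_nonexpansive
    (d : ℕ) (hd : 1 ≤ d)
    (g : ℝ → EReal)
    (hconv : ∀ a b θ : ℝ, 0 ≤ θ → θ ≤ 1 →
      g (θ * a + (1 - θ) * b) ≤ (θ : EReal) * g a + ((1 - θ : ℝ) : EReal) * g b)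
    (hproper_bot : ∀ z, g z ≠ ⊥) (hproper_top : ∃ z, g z ≠ ⊤)
    (hlsc : LowerSemicontinuous g)
    (x : EuclideanSpace ℝ (Fin d)) (hx : x ≠ 0)
    (w₁ w₂ : EuclideanSpace ℝ (Fin d)) (s₁ s₂ u₁ u₂ : ℝ)
    (hu₁min : ∀ u : ℝ,
      (((1 / 2) * ‖w₁ + (u₁ - s₁) • x‖ ^ 2 : ℝ) : EReal) + g u₁
        ≤ (((1 / 2) * ‖w₁ + (u - s₁) • x‖ ^ 2 : ℝ) : EReal) + g u)
    (hu₁uniq : ∀ u : ℝ,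
      (((1 / 2) * ‖w₁ + (u - s₁) • x‖ ^ 2 : ℝ) : EReal) + g u
        ≤ (((1 / 2) * ‖w₁ + (u₁ - s₁) • x‖ ^ 2 : ℝ) : EReal) + g u₁ → u = u₁)
    (hu₂min : ∀ u : ℝ,
      (((1 / 2) * ‖w₂ + (u₂ - s₂) • x‖ ^ 2 : ℝ) : EReal) + g u₂
        ≤ (((1 / 2) * ‖w₂ + (u - s₂) • x‖ ^ 2 : ℝ) : EReal) + g u)
    (hu₂uniq : ∀ u : ℝ,
      (((1 / 2) * ‖w₂ + (u - s₂) • x‖ ^ 2 : ℝ) : EReal) + g u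
        ≤ (((1 / 2) * ‖w₂ + (u₂ - s₂) • x‖ ^ 2 : ℝ) : EReal) + g u₂ → u = u₂) :
    |u₁ - u₂| ≤ |(s₁ - s₂) - ⟪w₁ - w₂, x⟫ / ‖x‖ ^ 2| := by
  set a : ℝ := ‖x‖^2 with hadef
  have ha : 0 < a := by
    have : 0 < ‖x‖ := norm_pos_iff.mpr hx
    positivity
  -- expansion of the quadratic
  have hexp : ∀ (w : EuclideanSpace ℝ (Fin d)) (s u : ℝ),
      (1/2) * ‖w + (u - s) • x‖^2
        = a/2*(u - (s - ⟪w, x⟫/a))^2 + ((1/2)*‖w‖^2 - ⟪w, x⟫^2/(2*a)) := by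
    intro w s u
    have h0 : ‖(u-s) • x‖^2 = (u-s)^2*a := by
      rw [norm_smul]; simp [hadef, mul_pow, sq_abs]
    have h1 : ‖w + (u-s) • x‖^2 = ‖w‖^2 + 2*((u-s)*⟪w, x⟫) + (u-s)^2*a := by
      rw [norm_add_sq_real, real_inner_smul_right, h0]
    rw [h1]; field_simp; ring
  set c₁ : ℝ := s₁ - ⟪w₁, x⟫/a with hc₁
  set c₂ : ℝ := s₂ - ⟪w₂, x⟫/a with hc₂
  -- finiteness of g at u₁ and u₂
  obtain ⟨z, hz⟩ := hproper_top
  have hfin : ∀ (w : EuclideanSpace ℝ (Fin d)) (s u' : ℝ),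
      (∀ u : ℝ, (((1 / 2) * ‖w + (u' - s) • x‖ ^ 2 : ℝ) : EReal) + g u'
        ≤ (((1 / 2) * ‖w + (u - s) • x‖ ^ 2 : ℝ) : EReal) + g u) → g u' ≠ ⊤ := by
    intro w s u' hmin htop
    have h1 := hmin z
    rw [htop] at h1
    rw [EReal.coe_add_top, top_le_iff] at h1
    exact (EReal.add_lt_top (EReal.coe_ne_top _) hz).ne h1
  have hg1top := hfin w₁ s₁ u₁ hu₁min
  have hg2top := hfin w₂ s₂ u₂ hu₂min
  set G₁ : ℝ := (g u₁).toReal with hG₁def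
  set G₂ : ℝ := (g u₂).toReal with hG₂def
  have hG₁ : g u₁ = (G₁ : EReal) := (EReal.coe_toReal hg1top (hproper_bot u₁)).symm
  have hG₂ : g u₂ = (G₂ : EReal) := (EReal.coe_toReal hg2top (hproper_bot u₂)).symm
  -- key subgradient-type inequalities
  have key₁ : G₁ - G₂ ≤ a*(u₂-u₁)*(u₁-c₁) := by
    apply aux_key_ineq _ _ _ _ _ _ ha
    intro θ hθpos hθ1
    have hmin := hu₁min (θ*u₂ + (1-θ)*u₁)
    have hc := hconv u₂ u₁ θ hθpos.le hθ1
    rw [hG₁, hG₂] at hc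
    have hcomb := le_trans hmin (add_le_add_right hc _)
    rw [hG₁] at hcomb
    have hcomb' : (1/2) * ‖w₁ + (u₁ - s₁) • x‖^2 + G₁
        ≤ (1/2) * ‖w₁ + ((θ*u₂ + (1-θ)*u₁) - s₁) • x‖^2 + (θ*G₂ + (1-θ)*G₁) := by
      exact_mod_cast hcomb
    rw [hexp, hexp] at hcomb'
    rw [← hc₁] at hcomb'
    linarith
  have key₂ : G₂ - G₁ ≤ a*(u₁-u₂)*(u₂-c₂) := by
    apply aux_key_ineq _ _ _ _ _ _ ha
    intro θ hθpos hθ1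
    have hmin := hu₂min (θ*u₁ + (1-θ)*u₂)
    have hc := hconv u₁ u₂ θ hθpos.le hθ1
    rw [hG₁, hG₂] at hc
    have hcomb := le_trans hmin (add_le_add_right hc _)
    rw [hG₂] at hcomb
    have hcomb' : (1/2) * ‖w₂ + (u₂ - s₂) • x‖^2 + G₂
        ≤ (1/2) * ‖w₂ + ((θ*u₁ + (1-θ)*u₂) - s₂) • x‖^2 + (θ*G₁ + (1-θ)*G₂) := by
      exact_mod_cast hcomb
    rw [hexp, hexp] at hcomb'
    rw [← hc₂] at hcomb'
    linarith
  -- conclude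
  have htarget : (s₁ - s₂) - ⟪w₁ - w₂, x⟫ / ‖x‖ ^ 2 = c₁ - c₂ := by
    rw [hc₁, hc₂, inner_sub_left, ← hadef]
    ring
  rw [htarget]
  rcases eq_or_ne u₁ u₂ with h | h
  · simp [h]
  · have hd0 : 0 < |u₁ - u₂| := abs_pos.mpr (sub_ne_zero.mpr h)
    have h2 : |u₁-u₂| * |u₁-u₂| ≤ |u₁-u₂| * |c₁-c₂| := by
      have hsq : (u₁-u₂)^2 ≤ (u₁-u₂)*(c₁-c₂) := by nlinarith
      calc |u₁-u₂| * |u₁-u₂| = (u₁-u₂)^2 := by rw [← abs_mul, ← sq, abs_of_nonneg (sq_nonneg _)]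
        _ ≤ (u₁-u₂)*(c₁-c₂) := hsq
        _ ≤ |(u₁-u₂)*(c₁-c₂)| := le_abs_self _
        _ = |u₁-u₂| * |c₁-c₂| := abs_mul _ _
    exact le_of_mul_le_mul_left h2 hd0
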